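/- arXiv:1804.02465 — 5 statements merged into one kernel-verified Lean document; each statement's English description precedes it below -/
import Mathlib

section
/- Let s be the optimal solution to min_{s} ½‖s−z‖₂² subject to 0 ≤ s_m ≤ 1 for all m and Σ_m s_m = N. If indices i, j satisfy z_i > z_j and s_i = 0, then s_j = 0. -/
theorem stmt_2 {M N : ℕ} (hN : 0 < N) (hNM : N ≤ M) (z s : Fin M → ℝ)
    (hs : ∀ m, 0 ≤ s m ∧ s m ≤ 1) (hsN : ∑ m, s m = N)
    (hmin : ∀ t : Fin M → ℝ, (∀ m, 0 ≤ t m ∧ t m ≤ 1) → ∑ m, t m = N →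
      ∑ m, (s m - z m) ^ 2 ≤ ∑ m, (t m - z m) ^ 2)
    (i j : Fin M) (hij : z j < z i) (hsi : s i = 0) :
    s j = 0 := by
  by_cases hije : i = j
  · rw [← hije]; exact hsi
  by_contra hsj
  have hsj' : 0 < s j := lt_of_le_of_ne (hs j).1 (Ne.symm hsj)
  set ε := min (s j) 1 with hε
  have hε0 : 0 < ε := lt_min hsj' one_pos
  have hε1 : ε ≤ 1 := min_le_right _ _
  have hεsj : ε ≤ s j := min_le_left _ _
  set t := Function.update (Function.update s i ε) j (s j - ε) with ht
  have hti : t i = ε := by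
    simp [ht, Function.update_apply, hije]
  have htj : t j = s j - ε := by simp [ht]
  have htm : ∀ m, m ≠ i → m ≠ j → t m = s m := by
    intro m hmi hmj
    simp [ht, Function.update_apply, hmi, hmj]
  have key : ∀ f g : Fin M → ℝ, (∀ m, m ≠ i → m ≠ j → f m = g m) →
      ∑ m, f m = ∑ m, g m + (f i - g i) + (f j - g j) := by
    intro f g h
    have h1 : ∑ m, (f m - g m) = ∑ m ∈ ({i, j} : Finset (Fin M)), (f m - g m) :=
      (Finset.sum_subset (Finset.subset_univ _) (fun x _ hx => by
        simp only [Finset.mem_insert, Finset.mem_singleton, not_or] at hx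
        rw [h x hx.1 hx.2]; ring)).symm
    rw [Finset.sum_pair hije] at h1
    rw [Finset.sum_sub_distrib] at h1
    linarith
  have ht_constr : ∀ m, 0 ≤ t m ∧ t m ≤ 1 := by
    intro m
    by_cases hmj : m = j
    · subst hmj
      rw [htj]
      constructor <;> [linarith; linarith [(hs m).2, hε0.le]]
    by_cases hmi : m = i
    · subst hmi
      rw [hti]
      exact ⟨hε0.le, hε1⟩
    · rw [htm m hmi hmj]; exact hs m
  have ht_sum : ∑ m, t m = N := by
    rw [key t s htm, hti, htj, hsi, hsN]; ring
  have hle := hmin t ht_constr ht_sum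
  have hkey2 := key (fun m => (t m - z m) ^ 2) (fun m => (s m - z m) ^ 2)
    (fun m hmi hmj => by rw [htm m hmi hmj])
  simp only [hti, htj, hsi] at hkey2
  nlinarith [hkey2, hle, mul_pos hε0 (sub_pos.mpr hij), mul_nonneg hε0.le (sub_nonneg.mpr hεsj)]
end

section
/- Let z ∈ ℝ^M have entries in non-increasing order and suppose s, the projection of z onto S = {s ∈ [0,1]^M : Σ s_m = N}, has at least one entry strictly between 0 and 1. Then there is exactly one r ∈ {1,…,N} admitting ρ ≥ r and κ = (1/(ρ−r+1))(Σ_{m=r}^{ρ} z_m − (N−r+1)) satisfying 0 < z_r − κ < 1 and (if r ≥ 2) z_{r−1} − κ ≥ 1, such that s is given by s_m = 1 for m ≤ r−1, s_m = z_m − κ for r ≤ m ≤ ρ, and s_m = 0 for m > ρ. -/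
open Finset in
theorem stmt_5 {M N : ℕ} (hN : 0 < N) (hNM : N ≤ M) (z s : ℕ → ℝ)
    (hsort : ∀ i ∈ Icc 1 M, ∀ j ∈ Icc 1 M, i ≤ j → z j ≤ z i)
    (hs : ∀ m ∈ Icc 1 M, 0 ≤ s m ∧ s m ≤ 1)
    (hsN : ∑ m ∈ Icc 1 M, s m = N)
    (hmin : ∀ t : ℕ → ℝ, (∀ m ∈ Icc 1 M, 0 ≤ t m ∧ t m ≤ 1) →
      (∑ m ∈ Icc 1 M, t m = N) →
      ∑ m ∈ Icc 1 M, (s m - z m) ^ 2 ≤ ∑ m ∈ Icc 1 M, (t m - z m) ^ 2)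
    (hfrac : ∃ m ∈ Icc 1 M, 0 < s m ∧ s m < 1) :
    ∃! r : ℕ, r ∈ Icc 1 N ∧
      ∃ ρ ∈ Icc r M,
        ∃ κ : ℝ,
          κ = ((∑ m ∈ Icc r ρ, z m) - ((N : ℝ) - r + 1)) / ((ρ : ℝ) - r + 1) ∧
          (0 < z r - κ ∧ z r - κ < 1) ∧
          (2 ≤ r → 1 ≤ z (r - 1) - κ) ∧
          (∀ m ∈ Icc 1 M,
            s m = if m ≤ r - 1 then 1 else if m ≤ ρ then z m - κ else 0) := by
  classical
  obtain ⟨m₀, hm₀, hs0, hs1⟩ := hfrac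
  simp only [mem_Icc] at hm₀
  -- Key perturbation inequality
  have key : ∀ i, 1 ≤ i → i ≤ M → ∀ j, 1 ≤ j → j ≤ M → s i < 1 → 0 < s j →
      s j - z j ≤ s i - z i := by
    intro i hi1 hiM j hj1 hjM hsi hsj
    by_cases hij : i = j
    · subst hij; exact le_rfl
    have hi : i ∈ Icc 1 M := mem_Icc.2 ⟨hi1, hiM⟩
    have hj : j ∈ Icc 1 M := mem_Icc.2 ⟨hj1, hjM⟩
    obtain ⟨hsi0, hsi1⟩ := hs i hi
    obtain ⟨hsj0, hsj1⟩ := hs j hj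
    have step : ∀ ε : ℝ, 0 < ε → ε ≤ 1 - s i → ε ≤ s j →
        s j - z j ≤ s i - z i + ε := by
      intro ε hε hε1 hε2
      set t : ℕ → ℝ := fun m =>
        s m + (if m = i then ε else 0) - (if m = j then ε else 0) with ht
      have hti : t i = s i + ε := by simp [ht, hij]
      have htj : t j = s j - ε := by simp [ht, Ne.symm hij]
      have tfeas : ∀ m ∈ Icc 1 M, 0 ≤ t m ∧ t m ≤ 1 := by
        intro m hm
        obtain ⟨h0m, h1m⟩ := hs m hm
        by_cases hmi : m = i
        · subst hmi; rw [hti]; constructor <;> linarith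
        by_cases hmj : m = j
        · subst hmj; rw [htj]; constructor <;> linarith
        simp [ht, hmi, hmj]; exact ⟨h0m, h1m⟩
      have tsum : ∑ m ∈ Icc 1 M, t m = N := by
        simp only [ht]
        rw [Finset.sum_sub_distrib, Finset.sum_add_distrib,
          Finset.sum_ite_eq' (Icc 1 M) i (fun _ => ε),
          Finset.sum_ite_eq' (Icc 1 M) j (fun _ => ε), if_pos hi, if_pos hj]
        linarith [hsN]
      have hobj := hmin t tfeas tsum
      have hsub : ({i, j} : Finset ℕ) ⊆ Icc 1 M := by
        intro x hx
        simp only [mem_insert, mem_singleton] at hx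
        rcases hx with rfl | rfl
        · exact hi
        · exact hj
      have hdecomp : ∀ f : ℕ → ℝ, ∑ m ∈ Icc 1 M, f m
          = (f i + f j) + ∑ m ∈ Icc 1 M \ {i, j}, f m := by
        intro f
        rw [← Finset.sum_sdiff hsub, Finset.sum_pair hij]
        ring
      rw [hdecomp (fun m => (s m - z m) ^ 2),
        hdecomp (fun m => (t m - z m) ^ 2)] at hobj
      have heq : ∑ m ∈ Icc 1 M \ ({i, j} : Finset ℕ), (t m - z m) ^ 2
          = ∑ m ∈ Icc 1 M \ ({i, j} : Finset ℕ), (s m - z m) ^ 2 := by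
        refine Finset.sum_congr rfl fun m hm => ?_
        rw [Finset.mem_sdiff, Finset.mem_insert, Finset.mem_singleton] at hm
        push_neg at hm
        simp [ht, hm.2.1, hm.2.2]
      rw [heq, hti, htj] at hobj
      nlinarith [hobj, hε, mul_pos hε hε]
    by_contra hcon
    push_neg at hcon
    set δ := (s j - z j) - (s i - z i) with hδdef
    have hδ : 0 < δ := by linarith
    set ε := min (δ / 2) (min (1 - s i) (s j)) with hεdef
    have hε : 0 < ε := lt_min (by linarith) (lt_min (by linarith) hsj)
    have h1 := step ε hε (le_trans (min_le_right _ _) (min_le_left _ _))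
      (le_trans (min_le_right _ _) (min_le_right _ _))
    have h2 : ε ≤ δ / 2 := min_le_left _ _
    linarith
  -- Lagrange multiplier
  set κ : ℝ := z m₀ - s m₀ with hκdef
  -- KKT characterization
  have hone_ge : ∀ m, 1 ≤ m → m ≤ M → s m = 1 → 1 + κ ≤ z m := by
    intro m h1 h2 hm1
    have := key m₀ hm₀.1 hm₀.2 m h1 h2 hs1 (by rw [hm1]; norm_num)
    rw [hm1] at this; simp only [hκdef]; linarith
  have hzero_le : ∀ m, 1 ≤ m → m ≤ M → s m = 0 → z m ≤ κ := by
    intro m h1 h2 hm0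
    have := key m h1 h2 m₀ hm₀.1 hm₀.2 (by rw [hm0]; norm_num) hs0
    rw [hm0] at this; simp only [hκdef]; linarith
  have hmid : ∀ m, 1 ≤ m → m ≤ M → 0 < s m → s m < 1 → s m = z m - κ := by
    intro m h1 h2 hp hl
    have ha := key m h1 h2 m₀ hm₀.1 hm₀.2 hl hs0
    have hb := key m₀ hm₀.1 hm₀.2 m h1 h2 hs1 hp
    simp only [hκdef]; linarith
  -- converse directions
  have hlt_one : ∀ m, 1 ≤ m → m ≤ M → s m < 1 → z m < 1 + κ := by
    intro m h1 h2 hl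
    have h0 := (hs m (mem_Icc.2 ⟨h1, h2⟩)).1
    rcases eq_or_lt_of_le h0 with he | hp
    · have := hzero_le m h1 h2 he.symm; linarith
    · have := hmid m h1 h2 hp hl; linarith
  have hpos_gt : ∀ m, 1 ≤ m → m ≤ M → 0 < s m → κ < z m := by
    intro m h1 h2 hp
    have h1m := (hs m (mem_Icc.2 ⟨h1, h2⟩)).2
    rcases eq_or_lt_of_le h1m with he | hl
    · have := hone_ge m h1 h2 he; linarith
    · have := hmid m h1 h2 hp hl; linarith
  -- define r
  have hex : ∃ m, 1 ≤ m ∧ m ≤ M ∧ s m < 1 := ⟨m₀, hm₀.1, hm₀.2, hs1⟩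
  set r : ℕ := Nat.find hex with hrdef
  obtain ⟨hr1, hrM, hsr⟩ : 1 ≤ r ∧ r ≤ M ∧ s r < 1 := Nat.find_spec hex
  have hrm₀ : r ≤ m₀ := Nat.find_min' hex ⟨hm₀.1, hm₀.2, hs1⟩
  have hones : ∀ m, 1 ≤ m → m < r → s m = 1 := by
    intro m h1 hmr
    have hmM : m ≤ M := le_trans (le_of_lt hmr) hrM
    have := Nat.find_min hex hmr
    push_neg at this
    have := this h1 hmM
    exact le_antisymm (hs m (mem_Icc.2 ⟨h1, hmM⟩)).2 this
  -- define ρ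
  set ρ : ℕ := Nat.findGreatest (fun m => 0 < s m) M with hρdef
  have hm₀ρ : m₀ ≤ ρ := Nat.le_findGreatest hm₀.2 hs0
  have hρM : ρ ≤ M := Nat.findGreatest_le M
  have hρ1 : 1 ≤ ρ := le_trans hm₀.1 hm₀ρ
  have hsρ : 0 < s ρ := Nat.findGreatest_of_ne_zero hρdef.symm (by omega)
  have hzeros : ∀ m, ρ < m → m ≤ M → s m = 0 := by
    intro m hρm hmM
    have := Nat.findGreatest_is_greatest (P := fun m => 0 < s m) (n := M)
      (by rw [← hρdef]; exact hρm) hmM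
    have h0 := (hs m (mem_Icc.2 ⟨by omega, hmM⟩)).1
    simp only [not_lt] at this
    linarith
  have hrρ : r ≤ ρ := le_trans hrm₀ hm₀ρ
  -- on [r, ρ] the values are fractional
  have hfracm : ∀ m, r ≤ m → m ≤ ρ → 0 < s m ∧ s m < 1 := by
    intro m hrm hmρ
    have h1m : 1 ≤ m := le_trans hr1 hrm
    have hmM : m ≤ M := le_trans hmρ hρM
    have hzm : κ < z m := by
      have hκρ : κ < z ρ := hpos_gt ρ hρ1 hρM hsρ
      have := hsort m (mem_Icc.2 ⟨h1m, hmM⟩) ρ (mem_Icc.2 ⟨hρ1, hρM⟩) hmρ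
      linarith
    have hz1 : z m < 1 + κ := by
      have hκr : z r < 1 + κ := hlt_one r hr1 hrM hsr
      have := hsort r (mem_Icc.2 ⟨hr1, hrM⟩) m (mem_Icc.2 ⟨h1m, hmM⟩) hrm
      linarith
    constructor
    · by_contra h
      push_neg at h
      have h0 := (hs m (mem_Icc.2 ⟨h1m, hmM⟩)).1
      have := hzero_le m h1m hmM (le_antisymm h h0)
      linarith
    · by_contra h
      push_neg at h
      have h1' := (hs m (mem_Icc.2 ⟨h1m, hmM⟩)).2
      have := hone_ge m h1m hmM (le_antisymm h1' h)
      linarith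
  have hval : ∀ m, r ≤ m → m ≤ ρ → s m = z m - κ := by
    intro m hrm hmρ
    obtain ⟨hp, hl⟩ := hfracm m hrm hmρ
    exact hmid m (le_trans hr1 hrm) (le_trans hmρ hρM) hp hl
  -- sum decomposition
  have hsplit : ∑ m ∈ Ioc 0 (r - 1), s m + ∑ m ∈ Ioc (r - 1) ρ, s m
      + ∑ m ∈ Ioc ρ M, s m = ∑ m ∈ Ioc 0 M, s m := by
    rw [Finset.sum_Ioc_consecutive _ (by omega : (0:ℕ) ≤ r - 1) (by omega : r - 1 ≤ ρ),
      Finset.sum_Ioc_consecutive _ (by omega : (0:ℕ) ≤ ρ) hρM]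
  have hIcc : Finset.Icc 1 M = Finset.Ioc 0 M := by
    rw [show (1:ℕ) = 0 + 1 from rfl, Finset.Icc_add_one_left_eq_Ioc]
  have hIoc_rρ : Finset.Ioc (r - 1) ρ = Finset.Icc r ρ := by
    rw [← Finset.Icc_add_one_left_eq_Ioc]
    congr 1
    omega
  have hsum1 : ∑ m ∈ Ioc 0 (r - 1), s m = (r : ℝ) - 1 := by
    have h1 : ∑ m ∈ Ioc 0 (r - 1), s m = ∑ m ∈ Ioc 0 (r - 1), (1 : ℝ) :=
      Finset.sum_congr rfl (fun m hm => by
        rw [mem_Ioc] at hm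
        exact hones m hm.1 (by omega))
    rw [h1, Finset.sum_const, Nat.card_Ioc, Nat.sub_zero, nsmul_eq_mul, mul_one,
      Nat.cast_sub hr1, Nat.cast_one]
  have hsum3 : ∑ m ∈ Ioc ρ M, s m = 0 := by
    apply Finset.sum_eq_zero
    intro m hm
    rw [mem_Ioc] at hm
    exact hzeros m hm.1 hm.2
  have hsum2 : ∑ m ∈ Ioc (r - 1) ρ, s m
      = (∑ m ∈ Icc r ρ, z m) - ((ρ : ℝ) - r + 1) * κ := by
    rw [hIoc_rρ]
    have h1 : ∑ m ∈ Icc r ρ, s m = ∑ m ∈ Icc r ρ, (z m - κ) :=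
      Finset.sum_congr rfl (fun m hm => by
        rw [mem_Icc] at hm
        exact hval m hm.1 hm.2)
    rw [h1, Finset.sum_sub_distrib, Finset.sum_const, Nat.card_Icc, nsmul_eq_mul]
    have : ((ρ + 1 - r : ℕ) : ℝ) = (ρ : ℝ) - r + 1 := by
      push_cast [Nat.cast_sub (by omega : r ≤ ρ + 1)]
      ring
    rw [this]
  have hsumN : ((r : ℝ) - 1) + ((∑ m ∈ Icc r ρ, z m) - ((ρ : ℝ) - r + 1) * κ)
      + 0 = N := by
    rw [← hsum1, ← hsum2, ← hsum3, hsplit, ← hIcc, hsN]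
  have hden : (0 : ℝ) < (ρ : ℝ) - r + 1 := by
    have : (r : ℝ) ≤ ρ := Nat.cast_le.2 hrρ
    linarith
  have hκeq : κ = ((∑ m ∈ Icc r ρ, z m) - ((N : ℝ) - r + 1)) / ((ρ : ℝ) - r + 1) := by
    field_simp
    linarith [hsumN]
  -- r ≤ N
  have hrN : r ≤ N := by
    have hpos_sum : 0 < ∑ m ∈ Ioc (r - 1) ρ, s m := by
      rw [hIoc_rρ]
      apply Finset.sum_pos
      · intro m hm
        rw [mem_Icc] at hm
        exact (hfracm m hm.1 hm.2).1
      · exact ⟨r, mem_Icc.2 ⟨le_refl r, hrρ⟩⟩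
    have : ((r : ℝ) - 1) + ∑ m ∈ Ioc (r - 1) ρ, s m + 0 = N := by
      rw [← hsum1, ← hsum3, hsplit, ← hIcc, hsN]
    have hlt : (r : ℝ) - 1 < N := by linarith
    have : (r : ℝ) < (N : ℝ) + 1 := by linarith
    exact_mod_cast Nat.lt_succ_iff.1 (by exact_mod_cast this)
  -- the formula
  have hformula : ∀ m ∈ Icc 1 M,
      s m = if m ≤ r - 1 then 1 else if m ≤ ρ then z m - κ else 0 := by
    intro m hm
    rw [mem_Icc] at hm
    by_cases h1 : m ≤ r - 1
    · rw [if_pos h1]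
      exact hones m hm.1 (by omega)
    · rw [if_neg h1]
      by_cases h2 : m ≤ ρ
      · rw [if_pos h2]
        exact hval m (by omega) h2
      · rw [if_neg h2]
        exact hzeros m (by omega) hm.2
  refine ⟨r, ⟨mem_Icc.2 ⟨hr1, hrN⟩, ρ, mem_Icc.2 ⟨hrρ, hρM⟩, κ, hκeq, ?_, ?_, hformula⟩, ?_⟩
  · have := hval r le_rfl hrρ
    obtain ⟨hp, hl⟩ := hfracm r le_rfl hrρ
    rw [this] at hp hl
    exact ⟨hp, hl⟩
  · intro h2r
    have hs1' : s (r - 1) = 1 := hones (r - 1) (by omega) (by omega)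
    have := hone_ge (r - 1) (by omega) (by omega) hs1'
    linarith
  · -- uniqueness
    rintro r' ⟨hr'N, ρ', hρ', κ', -, ⟨hκ'0, hκ'1⟩, -, hform'⟩
    rw [mem_Icc] at hr'N hρ'
    by_contra hne
    rcases lt_or_gt_of_ne hne with hlt | hgt
    · -- r' < r : formula for r' says s r' = z r' - κ' < 1, but hones says s r' = 1
      have hr'M : r' ≤ M := le_trans hr'N.2 hNM
      have := hform' r' (mem_Icc.2 ⟨hr'N.1, hr'M⟩)
      rw [if_neg (by omega), if_pos hρ'.1] at this
      have hone := hones r' hr'N.1 hlt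
      linarith
    · -- r < r' : formula for r' says s r = 1, but s r < 1
      have hrM' : r ≤ M := hrM
      have := hform' r (mem_Icc.2 ⟨hr1, hrM'⟩)
      rw [if_pos (by omega)] at this
      linarith
end

section
/- Fix a binary vector x ∈ {0,1}^M with exactly N ones, and let S = {z ∈ [0,1]^M : Σ z_m = N}. Then the set H = { (z−x)/‖z−x‖₁ : z ∈ S, z ≠ x } is convex. -/
theorem stmt_6 {M N : ℕ} (x : Fin M → ℝ)
    (hx : ∀ m, x m = 0 ∨ x m = 1)
    (hxN : ∑ m, x m = N) :
    Convex ℝ {h : Fin M → ℝ |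
      ∃ z : Fin M → ℝ, (∀ m, 0 ≤ z m ∧ z m ≤ 1) ∧ (∑ m, z m = N) ∧ z ≠ x ∧
        h = (∑ m, |z m - x m|)⁻¹ • (z - x)} := by
  rintro h₁ ⟨z₁, hz₁, hsum₁, hne₁, rfl⟩ h₂ ⟨z₂, hz₂, hsum₂, hne₂, rfl⟩ a b ha hb hab
  have key : ∀ z : Fin M → ℝ, (∀ m, 0 ≤ z m ∧ z m ≤ 1) →
      ∀ m, |z m - x m| = (1 - 2 * x m) * (z m - x m) := by
    intro z hz m
    rcases hx m with h | h
    · rw [h, sub_zero, mul_zero, sub_zero, one_mul, abs_of_nonneg (hz m).1]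
    · rw [h, abs_of_nonpos (by linarith [(hz m).2])]; ring
  have spos : ∀ z : Fin M → ℝ, (∀ m, 0 ≤ z m ∧ z m ≤ 1) → z ≠ x →
      0 < ∑ m, |z m - x m| := by
    intro z hz hne
    obtain ⟨m, hm⟩ : ∃ m, z m ≠ x m := by
      by_contra hcon; push_neg at hcon; exact hne (funext hcon)
    have h0 : 0 < |z m - x m| := abs_pos.2 (sub_ne_zero.2 hm)
    exact lt_of_lt_of_le h0
      (Finset.single_le_sum (f := fun i => |z i - x i|)
        (fun i _ => abs_nonneg _) (Finset.mem_univ m))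
  set s₁ := ∑ m, |z₁ m - x m| with hs₁
  set s₂ := ∑ m, |z₂ m - x m| with hs₂
  have hs₁pos : 0 < s₁ := spos z₁ hz₁ hne₁
  have hs₂pos : 0 < s₂ := spos z₂ hz₂ hne₂
  set w : Fin M → ℝ :=
    fun m => a * (s₁⁻¹ * (z₁ m - x m)) + b * (s₂⁻¹ * (z₂ m - x m)) with hw
  have habs : ∀ m, |w m| = (1 - 2 * x m) * w m := by
    intro m
    have h1 : 0 ≤ (1 - 2 * x m) * (z₁ m - x m) := by
      rw [← key z₁ hz₁ m]; exact abs_nonneg _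
    have h2 : 0 ≤ (1 - 2 * x m) * (z₂ m - x m) := by
      rw [← key z₂ hz₂ m]; exact abs_nonneg _
    have hnn : 0 ≤ (1 - 2 * x m) * w m := by
      have t1 : 0 ≤ a * (s₁⁻¹ * ((1 - 2 * x m) * (z₁ m - x m))) :=
        mul_nonneg ha (mul_nonneg (inv_nonneg.2 hs₁pos.le) h1)
      have t2 : 0 ≤ b * (s₂⁻¹ * ((1 - 2 * x m) * (z₂ m - x m))) :=
        mul_nonneg hb (mul_nonneg (inv_nonneg.2 hs₂pos.le) h2)
      have : (1 - 2 * x m) * w m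
          = a * (s₁⁻¹ * ((1 - 2 * x m) * (z₁ m - x m)))
            + b * (s₂⁻¹ * ((1 - 2 * x m) * (z₂ m - x m))) := by
        simp only [hw]; ring
      rw [this]; exact add_nonneg t1 t2
    rcases hx m with h | h
    · rw [h] at hnn ⊢
      rw [abs_of_nonneg (by linarith)]; ring
    · rw [h] at hnn ⊢
      rw [abs_of_nonpos (by linarith)]; ring
  have e1 : ∑ m, (1 - 2 * x m) * (z₁ m - x m) = s₁ :=
    Finset.sum_congr rfl (fun m _ => (key z₁ hz₁ m).symm)
  have e2 : ∑ m, (1 - 2 * x m) * (z₂ m - x m) = s₂ :=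
    Finset.sum_congr rfl (fun m _ => (key z₂ hz₂ m).symm)
  have hsumw_abs : ∑ m, |w m| = 1 := by
    have step : ∑ m, |w m|
        = a * s₁⁻¹ * (∑ m, (1 - 2 * x m) * (z₁ m - x m))
          + b * s₂⁻¹ * (∑ m, (1 - 2 * x m) * (z₂ m - x m)) := by
      rw [Finset.mul_sum, Finset.mul_sum, ← Finset.sum_add_distrib]
      refine Finset.sum_congr rfl (fun m _ => ?_)
      rw [habs m]; simp only [hw]; ring
    rw [step, e1, e2]
    field_simp
    linarith
  have hd1 : ∑ m, (z₁ m - x m) = 0 := by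
    rw [Finset.sum_sub_distrib, hsum₁, hxN, sub_self]
  have hd2 : ∑ m, (z₂ m - x m) = 0 := by
    rw [Finset.sum_sub_distrib, hsum₂, hxN, sub_self]
  have hsumw : ∑ m, w m = 0 := by
    have step : ∑ m, w m
        = a * s₁⁻¹ * (∑ m, (z₁ m - x m)) + b * s₂⁻¹ * (∑ m, (z₂ m - x m)) := by
      rw [Finset.mul_sum, Finset.mul_sum, ← Finset.sum_add_distrib]
      refine Finset.sum_congr rfl (fun m _ => ?_)
      simp only [hw]; ring
    rw [step, hd1, hd2]; ring
  have hwle : ∀ m, |w m| ≤ 1 := by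
    intro m
    calc |w m| ≤ ∑ i, |w i| :=
          Finset.single_le_sum (f := fun i => |w i|)
            (fun i _ => abs_nonneg _) (Finset.mem_univ m)
      _ = 1 := hsumw_abs
  refine ⟨x + w, ?_, ?_, ?_, ?_⟩
  · intro m
    have h1 := habs m
    have h2 := hwle m
    have h3 := abs_nonneg (w m)
    rcases hx m with h | h <;>
      simp only [Pi.add_apply, h] <;> constructor <;>
      nlinarith [abs_le.1 h2]
  · simp only [Pi.add_apply]
    rw [Finset.sum_add_distrib, hxN, hsumw, add_zero]
  · intro hcon
    have hw0 : w = 0 := by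
      have := congrArg (fun f => f - x) hcon
      simpa using this
    rw [hw0] at hsumw_abs
    simp at hsumw_abs
  · have hdiff : (fun m => |(x + w) m - x m|) = fun m => |w m| := by
      funext m; simp
    have hs : ∑ m, |(x + w) m - x m| = 1 := by
      rw [show (∑ m, |(x + w) m - x m|) = ∑ m, |w m| from
        Finset.sum_congr rfl (fun m _ => by simp), hsumw_abs]
    rw [hs]
    funext m
    simp only [Pi.add_apply, Pi.smul_apply, Pi.sub_apply, smul_eq_mul, inv_one, one_mul, hw]
    ring
end

section
/- Let x ∈ {0,1}^M be binary with exactly N ones, and E = Σ_{y=0}^{M−1} B_y x xᵀ B_yᵀ. Then λ_E := min over ĥ in the set G = {ĥ : Σ ĥ_i = 0, ĥ_i ∈ [0,0.5] if x_i = 0, ĥ_i ∈ [−0.5,0] if x_i = 1, ‖ĥ‖₁ = 1} of ĥᵀEĥ is strictly positive. -/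
open Matrix

def Amat (M : ℕ) (y : Fin M) : Matrix (Fin M) (Fin M) ℝ :=
  fun i j => if (j : ℕ) = (i : ℕ) + (y : ℕ) then 1 else 0

def Bmat (M : ℕ) (y : Fin M) : Matrix (Fin M) (Fin M) ℝ :=
  Amat M y + (Amat M y)ᵀ

def Emat (M : ℕ) (x : Fin M → ℝ) : Matrix (Fin M) (Fin M) ℝ :=
  ∑ y : Fin M, vecMulVec (Bmat M y *ᵥ x) (Bmat M y *ᵥ x)

def Gset (M : ℕ) (x : Fin M → ℝ) : Set (Fin M → ℝ) :=
  {h | (∑ i, h i = 0) ∧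
    (∀ i, x i = 0 → 0 ≤ h i ∧ h i ≤ 1 / 2) ∧
    (∀ i, x i = 1 → -(1 / 2) ≤ h i ∧ h i ≤ 0) ∧
    (∑ i, |h i| = 1)}

lemma sum_mulVec' {n : ℕ} {ι : Type*} (s : Finset ι)
    (A : ι → Matrix (Fin n) (Fin n) ℝ) (v : Fin n → ℝ) :
    (∑ i ∈ s, A i) *ᵥ v = ∑ i ∈ s, A i *ᵥ v := by
  funext j
  simp only [Matrix.mulVec, dotProduct, Matrix.sum_apply, Finset.sum_apply,
    Finset.sum_mul]
  exact Finset.sum_comm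

lemma dot_sum {n : ℕ} {ι : Type*} (s : Finset ι) (v : Fin n → ℝ)
    (f : ι → Fin n → ℝ) : v ⬝ᵥ (∑ i ∈ s, f i) = ∑ i ∈ s, v ⬝ᵥ f i := by
  simp only [dotProduct, Finset.sum_apply, Finset.mul_sum]
  exact Finset.sum_comm

lemma aux_quad {M : ℕ} (a h : Fin M → ℝ) :
    h ⬝ᵥ (vecMulVec a a *ᵥ h) = (a ⬝ᵥ h)^2 := by
  simp only [vecMulVec, Matrix.mulVec, dotProduct, Matrix.of_apply, sq]
  rw [Finset.sum_mul_sum]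
  refine Finset.sum_congr rfl fun i _ => ?_
  rw [Finset.mul_sum]
  exact Finset.sum_congr rfl fun j _ => by ring

lemma aux_B0 {M : ℕ} (hM : 0 < M) (x : Fin M → ℝ) :
    Bmat M ⟨0, hM⟩ *ᵥ x = fun i => 2 * x i := by
  funext i
  simp [Bmat, Amat, Matrix.mulVec, dotProduct, Matrix.transpose_apply,
    Fin.val_eq_val, eq_comm, two_mul, add_mul]
  rw [Finset.sum_add_distrib]
  simp [Finset.sum_ite_eq]

theorem stmt_15 {M N : ℕ} (x : Fin M → ℝ)
    (hx : ∀ m, x m = 0 ∨ x m = 1)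
    (hxN : ∑ m, x m = N) :
    ∀ h ∈ Gset M x, 0 < h ⬝ᵥ (Emat M x *ᵥ h) := by
  intro h hG
  obtain ⟨hsum, h0, h1, hnorm⟩ := hG
  have hM : 0 < M := by
    rcases Nat.eq_zero_or_pos M with hM | hM
    · subst hM; simp at hnorm
    · exact hM
  -- termwise nonpositivity of x i * h i
  have hterm : ∀ i, x i * h i ≤ 0 := by
    intro i
    rcases hx i with hi | hi
    · simp [hi]
    · have := (h1 i hi).2; nlinarith
  have hxh : x ⬝ᵥ h ≠ 0 := by
    intro hc
    have hall : ∀ i ∈ Finset.univ, x i * h i = 0 :=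
      (Finset.sum_eq_zero_iff_of_nonpos (fun i _ => hterm i)).mp hc
    have hnn : ∀ i, 0 ≤ h i := by
      intro i
      rcases hx i with hi | hi
      · exact (h0 i hi).1
      · have := hall i (Finset.mem_univ i)
        rw [hi, one_mul] at this
        exact this.ge
    have hz : ∀ i ∈ Finset.univ, h i = 0 :=
      (Finset.sum_eq_zero_iff_of_nonneg (fun i _ => hnn i)).mp hsum
    have : (∑ i, |h i|) = 0 := by
      apply Finset.sum_eq_zero
      intro i _
      rw [hz i (Finset.mem_univ i), abs_zero]
    rw [this] at hnorm
    norm_num at hnorm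
  have hrw : h ⬝ᵥ (Emat M x *ᵥ h) = ∑ y : Fin M, ((Bmat M y *ᵥ x) ⬝ᵥ h)^2 := by
    rw [Emat, sum_mulVec', dot_sum]
    exact Finset.sum_congr rfl fun y _ => aux_quad _ _
  rw [hrw]
  apply Finset.sum_pos' (fun y _ => sq_nonneg _)
  refine ⟨⟨0, hM⟩, Finset.mem_univ _, ?_⟩
  rw [aux_B0 hM x]
  have : (fun i => 2 * x i) ⬝ᵥ h = 2 * (x ⬝ᵥ h) := by
    simp [dotProduct, Finset.mul_sum, mul_assoc]
  rw [this]
  positivity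
end

section
/- Let x, z ∈ ℝ^M, x ≠ z, and for y ∈ {0,…,M−1} let A_y(i,j) = 1 iff j−i = y and i ≤ j. Define f(z) = (1/(4MK²)) Σ_{y=0}^{M−1} (zᵀB_y z − xᵀB_y x)² with B_y = A_y + A_yᵀ. Then the gradient satisfies ‖∇f(z)‖₂² ≤ (16/K²) ‖z‖₂² f(z). -/
open Matrix

/-- The objective `f(z) = (1/(4MK²)) ∑_y (zᵀB_y z − xᵀB_y x)²`. -/
noncomputable def fObj (M : ℕ) (K : ℝ) (x z : Fin M → ℝ) : ℝ :=
  (1 / (4 * M * K ^ 2)) *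
    ∑ y : Fin M, (z ⬝ᵥ (Bmat M y *ᵥ z) - x ⬝ᵥ (Bmat M y *ᵥ x)) ^ 2

/-- The gradient `∇f(z) = (1/(MK²)) ∑_y B_y z (zᵀB_y z − xᵀB_y x)`. -/
noncomputable def gradf (M : ℕ) (K : ℝ) (x z : Fin M → ℝ) : Fin M → ℝ :=
  fun i => (1 / (M * K ^ 2)) *
    ∑ y : Fin M, (Bmat M y *ᵥ z) i * (z ⬝ᵥ (Bmat M y *ᵥ z) - x ⬝ᵥ (Bmat M y *ᵥ x))

/-- extend a vector by zero -/
noncomputable def zext (M : ℕ) (z : Fin M → ℝ) (n : ℕ) : ℝ :=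
  if h : n < M then z ⟨n, h⟩ else 0

lemma key (M : ℕ) (u : ℕ → ℝ) (hu : ∀ n, 0 ≤ u n) (h0 : ∀ n, M ≤ n → u n = 0)
    (g : ℕ → ℕ) (hg : Set.InjOn g (Finset.range M)) :
    ∑ n ∈ Finset.range M, u (g n) ≤ ∑ n ∈ Finset.range M, u n := by
  rw [← Finset.sum_image (fun a ha b hb => hg ha hb)]
  rw [← Finset.sum_filter_add_sum_filter_not ((Finset.range M).image g) (· < M)]
  have h2 : ∑ m ∈ ((Finset.range M).image g).filter (fun m => ¬ m < M), u m = 0 := by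
    apply Finset.sum_eq_zero
    intro m hm
    exact h0 m (le_of_not_gt (Finset.mem_filter.mp hm).2)
  rw [h2, add_zero]
  apply Finset.sum_le_sum_of_subset_of_nonneg
  · intro m hm
    exact Finset.mem_range.mpr (Finset.mem_filter.mp hm).2
  · intro m _ _; exact hu m

lemma amat_mulVec (M : ℕ) (y : Fin M) (z : Fin M → ℝ) (i : Fin M) :
    (Amat M y *ᵥ z) i = zext M z ((i : ℕ) + (y : ℕ)) := by
  unfold zext
  simp only [Amat, mulVec, dotProduct, ite_mul, one_mul, zero_mul]
  split_ifs with h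
  · rw [Finset.sum_eq_single_of_mem (⟨(i:ℕ)+(y:ℕ), h⟩ : Fin M) (Finset.mem_univ _)
      (fun b _ hb => if_neg (fun hc => hb (Fin.ext hc)))]
    simp
  · apply Finset.sum_eq_zero
    intro j _
    apply if_neg
    intro hc
    exact h (hc ▸ j.isLt)


lemma amatT_mulVec (M : ℕ) (y : Fin M) (z : Fin M → ℝ) (j : Fin M) :
    ((Amat M y)ᵀ *ᵥ z) j = zext M z (if (y : ℕ) ≤ (j : ℕ) then (j : ℕ) - (y : ℕ) else M + (j : ℕ)) := by
  unfold zext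
  simp only [Amat, transpose, mulVec, dotProduct, Matrix.of_apply, ite_mul, one_mul, zero_mul]
  split_ifs with h h2 h3
  · -- y ≤ j, j - y < M
    rw [Finset.sum_eq_single_of_mem (⟨(j:ℕ)-(y:ℕ), h2⟩ : Fin M) (Finset.mem_univ _)]
    · simp [Nat.sub_add_cancel h]
    · intro b _ hb
      apply if_neg
      intro hc
      apply hb
      apply Fin.ext
      simp only [Fin.val_mk] at hc ⊢
      omega
  · exact absurd (lt_of_le_of_lt (Nat.sub_le _ _) j.isLt) h2
  · omega
  · apply Finset.sum_eq_zero
    intro i _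
    apply if_neg
    intro hc
    omega

lemma sum_sq_amat_le (M : ℕ) (y : Fin M) (z : Fin M → ℝ) :
    ∑ i : Fin M, ((Amat M y *ᵥ z) i) ^ 2 ≤ ∑ i : Fin M, (z i) ^ 2 := by
  have h := key M (fun n => (zext M z n) ^ 2) (fun n => sq_nonneg _)
    (fun n hn => by simp [zext, Nat.not_lt.mpr hn])
    (fun n => n + (y : ℕ)) (fun a _ b _ hab => by simp only at hab; omega)
  calc ∑ i : Fin M, ((Amat M y *ᵥ z) i) ^ 2
      = ∑ n ∈ Finset.range M, (zext M z (n + (y:ℕ))) ^ 2 := by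
        rw [← Fin.sum_univ_eq_sum_range (fun n => (zext M z (n + (y:ℕ))) ^ 2)]
        exact Finset.sum_congr rfl (fun i _ => by rw [amat_mulVec])
    _ ≤ ∑ n ∈ Finset.range M, (zext M z n) ^ 2 := h
    _ = ∑ i : Fin M, (z i) ^ 2 := by
        rw [← Fin.sum_univ_eq_sum_range (fun n => (zext M z n) ^ 2)]
        exact Finset.sum_congr rfl (fun i _ => by simp [zext, i.isLt])

lemma sum_sq_amatT_le (M : ℕ) (y : Fin M) (z : Fin M → ℝ) :
    ∑ i : Fin M, (((Amat M y)ᵀ *ᵥ z) i) ^ 2 ≤ ∑ i : Fin M, (z i) ^ 2 := by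
  have h := key M (fun n => (zext M z n) ^ 2) (fun n => sq_nonneg _)
    (fun n hn => by simp [zext, Nat.not_lt.mpr hn])
    (fun n => if (y : ℕ) ≤ n then n - (y : ℕ) else M + n)
    (fun a ha b hb hab => by
      simp only [Finset.coe_range, Set.mem_Iio] at ha hb
      simp only at hab
      split_ifs at hab <;> omega)
  calc ∑ i : Fin M, (((Amat M y)ᵀ *ᵥ z) i) ^ 2
      = ∑ n ∈ Finset.range M,
          (zext M z (if (y:ℕ) ≤ n then n - (y:ℕ) else M + n)) ^ 2 := by
        rw [← Fin.sum_univ_eq_sum_range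
          (fun n => (zext M z (if (y:ℕ) ≤ n then n - (y:ℕ) else M + n)) ^ 2)]
        exact Finset.sum_congr rfl (fun i _ => by rw [amatT_mulVec])
    _ ≤ ∑ n ∈ Finset.range M, (zext M z n) ^ 2 := h
    _ = ∑ i : Fin M, (z i) ^ 2 := by
        rw [← Fin.sum_univ_eq_sum_range (fun n => (zext M z n) ^ 2)]
        exact Finset.sum_congr rfl (fun i _ => by simp [zext, i.isLt])

lemma sum_sq_bmat_le (M : ℕ) (y : Fin M) (z : Fin M → ℝ) :
    ∑ i : Fin M, ((Bmat M y *ᵥ z) i) ^ 2 ≤ 4 * ∑ i : Fin M, (z i) ^ 2 := by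
  have h1 := sum_sq_amat_le M y z
  have h2 := sum_sq_amatT_le M y z
  have key : ∀ i : Fin M, ((Bmat M y *ᵥ z) i) ^ 2 ≤
      2 * ((Amat M y *ᵥ z) i) ^ 2 + 2 * (((Amat M y)ᵀ *ᵥ z) i) ^ 2 := by
    intro i
    have : (Bmat M y *ᵥ z) i = (Amat M y *ᵥ z) i + ((Amat M y)ᵀ *ᵥ z) i := by
      simp [Bmat, Matrix.add_mulVec]
    rw [this]
    nlinarith [sq_nonneg ((Amat M y *ᵥ z) i - ((Amat M y)ᵀ *ᵥ z) i)]
  calc ∑ i : Fin M, ((Bmat M y *ᵥ z) i) ^ 2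
      ≤ ∑ i : Fin M, (2 * ((Amat M y *ᵥ z) i) ^ 2 + 2 * (((Amat M y)ᵀ *ᵥ z) i) ^ 2) :=
        Finset.sum_le_sum (fun i _ => key i)
    _ = 2 * (∑ i : Fin M, ((Amat M y *ᵥ z) i) ^ 2)
        + 2 * (∑ i : Fin M, (((Amat M y)ᵀ *ᵥ z) i) ^ 2) := by
        rw [Finset.sum_add_distrib, Finset.mul_sum, Finset.mul_sum]
    _ ≤ 2 * (∑ i : Fin M, (z i) ^ 2) + 2 * (∑ i : Fin M, (z i) ^ 2) := by
        gcongr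
    _ = 4 * ∑ i : Fin M, (z i) ^ 2 := by ring



theorem stmt_19 {M : ℕ} (K : ℝ) (hK : 0 < K) (x z : Fin M → ℝ) (hxz : x ≠ z) :
    ∑ i, (gradf M K x z i) ^ 2 ≤
      (16 / K ^ 2) * (∑ i, (z i) ^ 2) * fObj M K x z := by
  rcases Nat.eq_zero_or_pos M with hM | hM
  · subst hM
    simp [fObj]
  set d : Fin M → ℝ := fun y => z ⬝ᵥ (Bmat M y *ᵥ z) - x ⬝ᵥ (Bmat M y *ᵥ x) with hd
  set Z : ℝ := ∑ i, (z i) ^ 2 with hZ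
  set S : ℝ := ∑ y, (d y) ^ 2 with hS
  have hZ0 : 0 ≤ Z := Finset.sum_nonneg fun i _ => sq_nonneg _
  have hS0 : 0 ≤ S := Finset.sum_nonneg fun y _ => sq_nonneg _
  have hKne : (K : ℝ) ≠ 0 := ne_of_gt hK
  have hMne : (M : ℝ) ≠ 0 := Nat.cast_ne_zero.mpr hM.ne'
  have step1 : ∑ i, (gradf M K x z i) ^ 2 ≤
      (1 / (M * K ^ 2)) ^ 2 * (M * (4 * Z * S)) := by
    have hinner : ∀ i : Fin M,
        (∑ y : Fin M, (Bmat M y *ᵥ z) i * d y) ^ 2 ≤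
          (M : ℝ) * ∑ y : Fin M, ((Bmat M y *ᵥ z) i) ^ 2 * (d y) ^ 2 := by
      intro i
      have := sq_sum_le_card_mul_sum_sq (s := (Finset.univ : Finset (Fin M)))
        (f := fun y => (Bmat M y *ᵥ z) i * d y)
      simpa [mul_pow] using this
    calc ∑ i, (gradf M K x z i) ^ 2
        = (1 / (M * K ^ 2)) ^ 2 *
            ∑ i, (∑ y : Fin M, (Bmat M y *ᵥ z) i * d y) ^ 2 := by
          rw [Finset.mul_sum]
          exact Finset.sum_congr rfl fun i _ => by rw [gradf]; ring
      _ ≤ (1 / (M * K ^ 2)) ^ 2 *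
            ∑ i, (M : ℝ) * ∑ y : Fin M, ((Bmat M y *ᵥ z) i) ^ 2 * (d y) ^ 2 := by
          refine mul_le_mul_of_nonneg_left (Finset.sum_le_sum fun i _ => hinner i) (by positivity)
      _ = (1 / (M * K ^ 2)) ^ 2 *
            ((M : ℝ) * ∑ y : Fin M, (d y) ^ 2 * ∑ i, ((Bmat M y *ᵥ z) i) ^ 2) := by
          rw [← Finset.mul_sum, Finset.sum_comm]
          congr 2
          exact Finset.sum_congr rfl fun y _ => by
            rw [Finset.mul_sum]
            exact Finset.sum_congr rfl fun i _ => by ring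
      _ ≤ (1 / (M * K ^ 2)) ^ 2 * ((M : ℝ) * ∑ y : Fin M, (d y) ^ 2 * (4 * Z)) := by
          refine mul_le_mul_of_nonneg_left (mul_le_mul_of_nonneg_left
            (Finset.sum_le_sum fun y _ => mul_le_mul_of_nonneg_left
              (sum_sq_bmat_le M y z) (sq_nonneg _)) (by positivity)) (by positivity)
      _ = (1 / (M * K ^ 2)) ^ 2 * (M * (4 * Z * S)) := by
          rw [hS, ← Finset.sum_mul]
          ring
  refine step1.trans (le_of_eq ?_)
  have : fObj M K x z = (1 / (4 * M * K ^ 2)) * S := rfl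
  rw [this]
  field_simp
  ring
end
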